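/- For all a, b modulo e, the identity Σ_{i=0}^{e−1} Σ_{j=0}^{e−1} ζ^{−(a i + b j)} J(i,j)_e = e² · (a,b)_e holds, where (a,b)_e is the cyclotomic number of order e. -/
import Mathlib

/-- Relation between Jacobi sums and cyclotomic numbers:
`∑_{i,j=0}^{e-1} ζ^{-(ai+bj)} J(i,j)_e = e² (a,b)_e`, where
`J(i,j)_e = ∑ v, χ^i(v) χ^j(1+v)` and `(a,b)_e = #{v : χ(v) = ζ^a, χ(v+1) = ζ^b}`,
with `γ` a generator of `Fˣ`, `ζ` a primitive complex `e`-th root of unity and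
`χ(γ) = ζ`. -/
theorem sum_zeta_mul_jacobi_eq_cyclotomic
    (F : Type) [Field F] [Fintype F] (e : ℕ) (he : 2 ≤ e)
    (hq : Fintype.card F % e = 1)
    (γ : Fˣ) (hγ : ∀ u : Fˣ, u ∈ Subgroup.zpowers γ)
    (ζ : ℂ) (hζ : IsPrimitiveRoot ζ e)
    (χ : MulChar F ℂ) (hχγ : χ (γ : F) = ζ)
    (a b : ℕ) :
    ∑ i ∈ Finset.range e, ∑ j ∈ Finset.range e,
        ζ ^ (-((a : ℤ) * i + (b : ℤ) * j)) * ∑ v : F, (χ ^ i) v * (χ ^ j) (1 + v)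
      = (e : ℂ) ^ 2
        * (Set.ncard {v : F | χ v = ζ ^ a ∧ χ (v + 1) = ζ ^ b} : ℂ) := by
  classical
  have he0 : e ≠ 0 := by omega
  have hζ0 : ζ ≠ 0 := hζ.ne_zero he0
  have hζe : ζ ^ e = 1 := hζ.pow_eq_one
  have hval : ∀ v : F, v ≠ 0 → ∃ k : ℕ, χ v = ζ ^ k := by
    intro v hv
    obtain ⟨k, hk⟩ := mem_powers_iff_mem_zpowers.2 (hγ (Units.mk0 v hv))
    have hk' : γ ^ k = Units.mk0 v hv := hk
    refine ⟨k, ?_⟩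
    have hv2 : v = ((γ ^ k : Fˣ) : F) := by rw [hk']; rfl
    rw [hv2, Units.val_pow_eq_pow_val, map_pow, hχγ]
  have key : ∀ (c : ℕ) (z : ℂ), z ^ e = 1 →
      ∑ i ∈ Finset.range e, (ζ ^ (-(c : ℤ))) ^ i * z ^ i
        = if z = ζ ^ c then (e : ℂ) else 0 := by
    intro c z hz
    have hsum : ∑ i ∈ Finset.range e, (ζ ^ (-(c : ℤ))) ^ i * z ^ i
        = ∑ i ∈ Finset.range e, (ζ ^ (-(c : ℤ)) * z) ^ i :=
      Finset.sum_congr rfl fun i _ => (mul_pow _ _ _).symm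
    rw [hsum]
    by_cases h : z = ζ ^ c
    · subst h
      have h1 : ζ ^ (-(c : ℤ)) * ζ ^ c = 1 := by
        rw [← zpow_natCast ζ c, ← zpow_add₀ hζ0]; simp
      simp only [h1, one_pow, Finset.sum_const, Finset.card_range, nsmul_eq_mul, mul_one]
      simp
    · have hw1 : ζ ^ (-(c : ℤ)) * z ≠ 1 := by
        intro hw
        apply h
        have h2 := congrArg (fun t => ζ ^ (c : ℤ) * t) hw
        simp only [mul_one] at h2
        rw [← mul_assoc, ← zpow_add₀ hζ0] at h2
        simp only [add_neg_cancel, zpow_zero, one_mul] at h2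
        exact h2.trans (zpow_natCast ζ c)
      have hze : (ζ ^ (-(c : ℤ))) ^ e = 1 := by
        rw [← zpow_natCast (ζ ^ (-(c : ℤ))) e, ← zpow_mul, mul_comm, zpow_mul,
          zpow_natCast, hζe, one_zpow]
      have hwe : (ζ ^ (-(c : ℤ)) * z) ^ e = 1 := by
        rw [mul_pow, hze, one_mul, hz]
      rw [if_neg h, geom_sum_eq hw1, hwe, sub_self, zero_div]
  have inner : ∀ (c : ℕ) (v : F),
      ∑ i ∈ Finset.range e, (ζ ^ (-(c : ℤ))) ^ i * (χ ^ i) v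
        = if χ v = ζ ^ c then (e : ℂ) else 0 := by
    intro c v
    by_cases hv : v = 0
    · subst hv
      have h0 : ∀ i, (χ ^ i) (0 : F) = 0 := fun i =>
        MulChar.map_nonunit _ (by simp)
      have hne : χ (0 : F) ≠ ζ ^ c := by
        rw [MulChar.map_nonunit χ (by simp)]
        exact fun h => (pow_ne_zero c hζ0) h.symm
      simp [h0, hne]
    · obtain ⟨k, hk⟩ := hval v hv
      have hu : IsUnit v := Ne.isUnit hv
      have hpow : ∀ i : ℕ, (χ ^ i) v = (χ v) ^ i := by
        intro i
        have := MulChar.pow_apply_coe χ i hu.unit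
        simpa [hu.unit_spec] using this
      have hze : (χ v) ^ e = 1 := by
        rw [hk, ← pow_mul, mul_comm, pow_mul, hζe, one_pow]
      simp_rw [hpow]
      exact key c (χ v) hze
  have hsplit : ∀ i j : ℕ,
      ζ ^ (-((a : ℤ) * i + (b : ℤ) * j))
        = (ζ ^ (-(a : ℤ))) ^ i * (ζ ^ (-(b : ℤ))) ^ j := by
    intro i j
    have h3 : -((a : ℤ) * i + (b : ℤ) * j) = (-(a : ℤ)) * i + (-(b : ℤ)) * j := by ring
    rw [h3, zpow_add₀ hζ0, zpow_mul, zpow_mul, zpow_natCast, zpow_natCast]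
  calc ∑ i ∈ Finset.range e, ∑ j ∈ Finset.range e,
        ζ ^ (-((a : ℤ) * i + (b : ℤ) * j)) * ∑ v : F, (χ ^ i) v * (χ ^ j) (1 + v)
      = ∑ i ∈ Finset.range e, ∑ j ∈ Finset.range e, ∑ v : F,
          ((ζ ^ (-(a : ℤ))) ^ i * (χ ^ i) v) * ((ζ ^ (-(b : ℤ))) ^ j * (χ ^ j) (1 + v)) := by
        refine Finset.sum_congr rfl fun i _ => Finset.sum_congr rfl fun j _ => ?_
        rw [hsplit, Finset.mul_sum]
        exact Finset.sum_congr rfl fun v _ => by ring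
    _ = ∑ i ∈ Finset.range e, ∑ v : F, ∑ j ∈ Finset.range e,
          ((ζ ^ (-(a : ℤ))) ^ i * (χ ^ i) v) * ((ζ ^ (-(b : ℤ))) ^ j * (χ ^ j) (1 + v)) :=
        Finset.sum_congr rfl fun i _ => Finset.sum_comm
    _ = ∑ v : F, ∑ i ∈ Finset.range e, ∑ j ∈ Finset.range e,
          ((ζ ^ (-(a : ℤ))) ^ i * (χ ^ i) v) * ((ζ ^ (-(b : ℤ))) ^ j * (χ ^ j) (1 + v)) :=
        Finset.sum_comm
    _ = ∑ v : F, (∑ i ∈ Finset.range e, (ζ ^ (-(a : ℤ))) ^ i * (χ ^ i) v)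
          * (∑ j ∈ Finset.range e, (ζ ^ (-(b : ℤ))) ^ j * (χ ^ j) (1 + v)) := by
        exact Finset.sum_congr rfl fun v _ => (Finset.sum_mul_sum _ _ _ _).symm
    _ = ∑ v : F, (if χ v = ζ ^ a then (e : ℂ) else 0)
          * (if χ (v + 1) = ζ ^ b then (e : ℂ) else 0) := by
        refine Finset.sum_congr rfl fun v _ => ?_
        rw [inner a v, inner b (1 + v), add_comm 1 v]
    _ = ∑ v : F, (if χ v = ζ ^ a ∧ χ (v + 1) = ζ ^ b then (e : ℂ) ^ 2 else 0) := by
        refine Finset.sum_congr rfl fun v _ => ?_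
        by_cases h1 : χ v = ζ ^ a <;> by_cases h2 : χ (v + 1) = ζ ^ b <;>
          simp [h1, h2, sq]
    _ = (e : ℂ) ^ 2 * (Set.ncard {v : F | χ v = ζ ^ a ∧ χ (v + 1) = ζ ^ b} : ℂ) := by
        rw [← Finset.sum_filter, Finset.sum_const, nsmul_eq_mul]
        have hcard : {v : F | χ v = ζ ^ a ∧ χ (v + 1) = ζ ^ b}.ncard
            = (Finset.univ.filter fun v : F => χ v = ζ ^ a ∧ χ (v + 1) = ζ ^ b).card := by
          rw [Set.ncard_eq_toFinset_card', Set.toFinset_setOf]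
        rw [hcard, mul_comm]
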